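/- arXiv:1304.0852 — 2 statements merged into one kernel-verified Lean document; each statement's English description precedes it below -/
import Mathlib

section
/- Assume m ≥ 2, and let Q : V → F be any quadratic form whose polar form is B (i.e., Q(u+w) + Q(u) + Q(w) = B(u,w) for all u, w ∈ V), with isometry group O(Q) = {g ∈ GL(V) : Q(g v) = Q(v) for all v ∈ V}. Then two nonzero vectors u, u' ∈ V lie in the same O(Q)-orbit if and only if Q(u) = Q(u'); consequently O(Q) has exactly q orbits on V∖{0}, namely the level sets {v ∈ V∖{0} : Q(v) = λ} for λ ∈ F. -/
set_option synthInstance.maxHeartbeats 1000000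
set_option maxHeartbeats 1000000

open scoped BigOperators

abbrev Fq (f : ℕ) : Type := GaloisField 2 f
abbrev V (f m : ℕ) : Type := (Fin m → Fq f) × (Fin m → Fq f)
noncomputable def B {f m : ℕ} (u w : V f m) : Fq f :=
  ∑ i, (u.1 i * w.2 i + u.2 i * w.1 i)

namespace OrbAux

variable {f m : ℕ}

lemma htwo : (2 : Fq f) = 0 := by exact_mod_cast CharP.cast_eq_zero (Fq f) 2

lemma addF (x : Fq f) : x + x = 0 := by linear_combination x * (htwo (f := f))

lemma addV (x : V f m) : x + x = 0 := by
  rw [← two_smul (Fq f) x, htwo, zero_smul]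

lemma exists_sq (y : Fq f) : ∃ x : Fq f, x ^ 2 = y := by
  have hinj : Function.Injective (fun x : Fq f => x ^ 2) := by
    intro a b h
    simp only at h
    have h2 : (a + b) ^ 2 = 0 := by
      linear_combination h + (a * b + b * b) * (htwo (f := f))
    have h3 : a + b = 0 := by
      exact pow_eq_zero_iff (by norm_num) |>.mp h2
    linear_combination h3 - b * (htwo (f := f))
  exact Finite.surjective_of_injective hinj y

lemma B_add_left (x y w : V f m) : B (x + y) w = B x w + B y w := by
  simp only [B, Prod.fst_add, Prod.snd_add, Pi.add_apply, ← Finset.sum_add_distrib]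
  exact Finset.sum_congr rfl fun i _ => by ring

lemma B_add_right (x y w : V f m) : B x (y + w) = B x y + B x w := by
  simp only [B, Prod.fst_add, Prod.snd_add, Pi.add_apply, ← Finset.sum_add_distrib]
  exact Finset.sum_congr rfl fun i _ => by ring

lemma B_smul_left (c : Fq f) (x w : V f m) : B (c • x) w = c * B x w := by
  simp only [B, Prod.smul_fst, Prod.smul_snd, Pi.smul_apply, smul_eq_mul, Finset.mul_sum]
  exact Finset.sum_congr rfl fun i _ => by ring

lemma B_smul_right (c : Fq f) (x w : V f m) : B x (c • w) = c * B x w := by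
  simp only [B, Prod.smul_fst, Prod.smul_snd, Pi.smul_apply, smul_eq_mul, Finset.mul_sum]
  exact Finset.sum_congr rfl fun i _ => by ring

lemma B_comm (x w : V f m) : B x w = B w x := by
  simp only [B]
  exact Finset.sum_congr rfl fun i _ => by ring

lemma B_self (x : V f m) : B x x = 0 := by
  simp only [B]
  apply Finset.sum_eq_zero
  intro i _
  linear_combination (x.1 i * x.2 i) * (htwo (f := f))

/-- the linear functional `x ↦ B x a`. -/
noncomputable def Bfun (a : V f m) : V f m →ₗ[Fq f] Fq f where
  toFun x := B x a
  map_add' x y := B_add_left x y a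
  map_smul' c x := B_smul_left c x a

@[simp] lemma Bfun_apply (a x : V f m) : Bfun a x = B x a := rfl

lemma B_zero_left (w : V f m) : B 0 w = 0 := by
  simpa using B_smul_left 0 0 w

/-- nondegeneracy -/
lemma eq_zero_of_B (v : V f m) (h : ∀ w, B v w = 0) : v = 0 := by
  have h1 : ∀ j, v.1 j = 0 := by
    intro j
    have := h (0, Pi.single j 1)
    simpa [B, Pi.single_apply, mul_ite] using this
  have h2 : ∀ j, v.2 j = 0 := by
    intro j
    have := h (Pi.single j 1, 0)
    simpa [B, Pi.single_apply, mul_ite] using this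
  ext j
  · exact h1 j
  · exact h2 j

noncomputable def eV (k : Fin m) : V f m := (Pi.single k 1, 0)
noncomputable def fV (k : Fin m) : V f m := (0, Pi.single k 1)

lemma B_eV (u : V f m) (k : Fin m) : B u (eV k) = u.2 k := by
  simp [B, eV, Pi.single_apply, mul_ite]

lemma B_fV (u : V f m) (k : Fin m) : B u (fV k) = u.1 k := by
  simp [B, fV, Pi.single_apply, mul_ite]

lemma eV_ne_zero (k : Fin m) : (eV k : V f m) ≠ 0 := by
  intro h
  have := congrArg (fun w : V f m => w.1 k) h
  simp [eV] at this

lemma smul_eV_add_ne_zero (c : Fq f) (hc : c ≠ 0) (k : Fin m) (w : V f m)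
    (hw : w.1 k = 0) : c • (eV k : V f m) + w ≠ 0 := by
  intro h
  have := congrArg (fun w : V f m => w.1 k) h
  simp [eV, hw] at this
  exact hc this

lemma exists_B_eq_one (u : V f m) (hu : u ≠ 0) : ∃ b, B u b = 1 := by
  have hj : ∃ j, u.1 j ≠ 0 ∨ u.2 j ≠ 0 := by
    by_contra h
    push_neg at h
    apply hu
    ext j
    · exact (h j).1
    · exact (h j).2
  obtain ⟨j, hj⟩ := hj
  by_cases h1 : u.1 j ≠ 0
  · exact ⟨(u.1 j)⁻¹ • fV j, by rw [B_smul_right, B_fV, inv_mul_cancel₀ h1]⟩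
  · have h2 : u.2 j ≠ 0 := by tauto
    exact ⟨(u.2 j)⁻¹ • eV j, by rw [B_smul_right, B_eV, inv_mul_cancel₀ h2]⟩
section Q
variable (Q : V f m → Fq f)
variable (hQ : ∀ c : Fq f, ∀ v : V f m, Q (c • v) = c ^ 2 * Q v)
variable (hpolar : ∀ u w : V f m, Q (u + w) + Q u + Q w = B u w)

include hQ hpolar

lemma Qzero : Q (0 : V f m) = 0 := by
  have := hQ 0 0
  simpa using this

lemma Qadd (x y : V f m) : Q (x + y) = Q x + Q y + B x y := by
  linear_combination hpolar x y - (Q x + Q y) * (htwo (f := f))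

lemma Qaddsmul (x a : V f m) (c : Fq f) :
    Q (x + c • a) = Q x + c ^ 2 * Q a + c * B x a := by
  rw [Qadd Q hQ hpolar, hQ, B_smul_right]

lemma cancel2 (p q r : V f m) : p + q + r + q + r = p := by
  have h : p + q + r + q + r = p + (q + q) + (r + r) := by abel
  rw [h, addV, addV, add_zero, add_zero]

lemma transvection_exists (a : V f m) (ha : Q a ≠ 0) :
    ∃ g : (V f m →ₗ[Fq f] V f m)ˣ,
      (∀ v, Q ((g : V f m →ₗ[Fq f] V f m) v) = Q v) ∧
      (∀ x, (g : V f m →ₗ[Fq f] V f m) x = x + ((Q a)⁻¹ * B x a) • a) := by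
  set T : V f m →ₗ[Fq f] V f m := LinearMap.id + ((Q a)⁻¹ • Bfun a).smulRight a with hT
  have happ : ∀ x, T x = x + ((Q a)⁻¹ * B x a) • a := by
    intro x
    rw [hT]
    simp only [LinearMap.add_apply, LinearMap.id_apply, LinearMap.smulRight_apply,
      LinearMap.smul_apply, Bfun_apply, smul_eq_mul]
  have hinv : ∀ x, T (T x) = x := by
    intro x
    rw [happ, happ]
    rw [B_add_left, B_smul_left, B_self, mul_zero, add_zero]
    rw [add_assoc, ← add_smul]
    have h0 : (Q a)⁻¹ * B x a + (Q a)⁻¹ * B x a = 0 := addF _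
    rw [h0, zero_smul, add_zero]
  have hisom : ∀ x, Q (T x) = Q x := by
    intro x
    rw [happ, Qaddsmul Q hQ hpolar]
    have h1 : (Q a)⁻¹ * Q a = 1 := inv_mul_cancel₀ ha
    linear_combination ((Q a)⁻¹ * B x a ^ 2) * h1 + ((Q a)⁻¹ * B x a ^ 2) * (htwo (f := f))
  refine ⟨⟨T, T, ?_, ?_⟩, hisom, happ⟩ <;>
    exact LinearMap.ext fun x => by
      rw [Module.End.mul_apply, Module.End.one_apply]; exact hinv x

lemma eichler_exists (z a : V f m) (hz : Q z = 0) (hza : B z a = 0) :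
    ∃ g : (V f m →ₗ[Fq f] V f m)ˣ,
      (∀ v, Q ((g : V f m →ₗ[Fq f] V f m) v) = Q v) ∧
      (∀ x, (g : V f m →ₗ[Fq f] V f m) x
          = x + (B x z) • a + (B x a + Q a * B x z) • z) := by
  have haz : B a z = 0 := by rw [B_comm]; exact hza
  set T : V f m →ₗ[Fq f] V f m :=
    LinearMap.id + (Bfun z).smulRight a + (Bfun a + Q a • Bfun z).smulRight z with hT
  have happ : ∀ x, T x = x + (B x z) • a + (B x a + Q a * B x z) • z := by
    intro x
    rw [hT]
    simp only [LinearMap.add_apply, LinearMap.id_apply, LinearMap.smulRight_apply,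
      LinearMap.smul_apply, Bfun_apply, smul_eq_mul]
  have hBz : ∀ x, B (T x) z = B x z := by
    intro x
    rw [happ, B_add_left, B_add_left, B_smul_left, B_smul_left, haz, B_self]
    ring
  have hBa : ∀ x, B (T x) a = B x a := by
    intro x
    rw [happ, B_add_left, B_add_left, B_smul_left, B_smul_left, B_self, hza]
    ring
  have hinv : ∀ x, T (T x) = x := by
    intro x
    rw [happ (T x), hBz, hBa, happ x]
    exact cancel2 Q hQ hpolar x (B x z • a) ((B x a + Q a * B x z) • z)
  have hisom : ∀ x, Q (T x) = Q x := by
    intro x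
    rw [happ]
    rw [Qadd Q hQ hpolar (x + B x z • a), Qadd Q hQ hpolar x, hQ, hQ, hz,
      B_smul_right, B_smul_right, B_add_left, B_smul_left, haz]
    ring_nf
    linear_combination (B x z * B x a + (B x z)^2 * Q a) * (htwo (f := f))
  refine ⟨⟨T, T, ?_, ?_⟩, hisom, happ⟩ <;>
    exact LinearMap.ext fun x => by
      rw [Module.End.mul_apply, Module.End.one_apply]; exact hinv x

end Q

section Q2
variable (Q : V f m → Fq f)
variable (hQ : ∀ c : Fq f, ∀ v : V f m, Q (c • v) = c ^ 2 * Q v)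
variable (hpolar : ∀ u w : V f m, Q (u + w) + Q u + Q w = B u w)

lemma exists_sq_mul (a : Fq f) (ha : a ≠ 0) (y : Fq f) : ∃ x, a * x ^ 2 = y := by
  obtain ⟨x, hx⟩ := exists_sq (a⁻¹ * y)
  refine ⟨x, by rw [hx]; field_simp⟩

lemma solve_binary (a b p r k : Fq f) :
    ∃ s t, a * s ^ 2 + b * t ^ 2 + s * t + p * s + r * t + k = 0 := by
  by_cases ha : a ≠ 0
  · obtain ⟨σ, hσ⟩ := exists_sq_mul a ha (a * r ^ 2 + b * p ^ 2 + p * r + k)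
    refine ⟨σ + r, p, ?_⟩
    linear_combination hσ + (a * σ * r + a * r ^ 2 + b * p ^ 2 + σ * p + r * p + p * r + k)
      * (htwo (f := f))
  · push_neg at ha
    subst ha
    by_cases hb : b ≠ 0
    · obtain ⟨τ, hτ⟩ := exists_sq_mul b hb (b * p ^ 2 + p * r + k)
      refine ⟨r, τ + p, ?_⟩
      linear_combination hτ + (b * τ * p + b * p ^ 2 + r * τ + r * p + p * r + k)
        * (htwo (f := f))
    · push_neg at hb
      subst hb
      refine ⟨p * r + k + r, 1 + p, ?_⟩
      linear_combination ((p * r + k) * p + r + 2 * r * p + k) * (htwo (f := f))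

include hQ hpolar

lemma exists_isotropic (hm : 2 ≤ m) (u : V f m) (hu : u ≠ 0) :
    ∃ v, Q v = 0 ∧ B u v = 1 := by
  have hj : ∃ j, u.1 j ≠ 0 ∨ u.2 j ≠ 0 := by
    by_contra h
    push_neg at h
    apply hu
    ext j
    · exact (h j).1
    · exact (h j).2
  obtain ⟨j, hj⟩ := hj
  obtain ⟨k, hkj⟩ := Fintype.exists_ne_of_one_lt_card (by rw [Fintype.card_fin]; omega) j
  have hjk : j ≠ k := fun h => hkj h.symm
  obtain ⟨d, hd1, hd2, hd3⟩ :
      ∃ d, B u d = 1 ∧ B (eV k) d = 0 ∧ B (fV k) d = 0 := by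
    by_cases h1 : u.1 j ≠ 0
    · refine ⟨(u.1 j)⁻¹ • fV j, ?_, ?_, ?_⟩
      · rw [B_smul_right, B_fV, inv_mul_cancel₀ h1]
      · rw [B_smul_right, B_fV]
        simp [eV, fV, Pi.single_apply, hjk]
      · rw [B_smul_right, B_fV]
        simp [fV]
    · have h2 : u.2 j ≠ 0 := by tauto
      refine ⟨(u.2 j)⁻¹ • eV j, ?_, ?_, ?_⟩
      · rw [B_smul_right, B_eV, inv_mul_cancel₀ h2]
      · rw [B_smul_right, B_eV]
        simp [eV]
      · rw [B_smul_right, B_eV]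
        simp [fV, eV, Pi.single_apply, hjk]
  set z : V f m := eV k + u.2 k • d with hzdef
  set z' : V f m := fV k + u.1 k • d with hz'def
  have hBuz : B u z = 0 := by
    rw [hzdef, B_add_right, B_smul_right, B_eV, hd1, mul_one]
    exact addF _
  have hBuz' : B u z' = 0 := by
    rw [hz'def, B_add_right, B_smul_right, B_fV, hd1, mul_one]
    exact addF _
  have hBeVfV : B (eV k : V f m) (fV k) = 1 := by
    rw [B_fV]
    simp [eV, Pi.single_apply]
  have hzz' : B z z' = 1 := by
    rw [hzdef, hz'def, B_add_left, B_add_right, B_add_right,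
      B_smul_left, B_smul_right, B_smul_left, B_smul_right, B_self,
      hd2, hBeVfV]
    have : B d (fV k) = 0 := by rw [B_comm]; exact hd3
    rw [this]
    ring
  obtain ⟨s, t, hst⟩ := solve_binary (Q z) (Q z') (B d z) (B d z') (Q d)
  refine ⟨d + (s • z + t • z'), ?_, ?_⟩
  · rw [Qadd Q hQ hpolar, Qadd Q hQ hpolar, hQ, hQ,
      B_smul_left, B_smul_right, hzz',
      B_add_right, B_smul_right, B_smul_right]
    linear_combination hst
  · rw [B_add_right, B_add_right, B_smul_right, B_smul_right, hd1, hBuz, hBuz']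
    ring

lemma unit_ne_zero (g : (V f m →ₗ[Fq f] V f m)ˣ) (u : V f m) (hu : u ≠ 0) :
    (g : V f m →ₗ[Fq f] V f m) u ≠ 0 := by
  intro h
  apply hu
  have h2 : ((g⁻¹ : (V f m →ₗ[Fq f] V f m)ˣ) : V f m →ₗ[Fq f] V f m)
      ((g : V f m →ₗ[Fq f] V f m) u) = u := by
    rw [← Module.End.mul_apply, ← Units.val_mul, inv_mul_cancel, Units.val_one,
      Module.End.one_apply]
  rw [h, map_zero] at h2
  exact h2.symm

lemma add_cancel_char2 (x y : V f m) : x + (x + y) = y := by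
  rw [← add_assoc, addV, zero_add]

lemma transitive (hm : 2 ≤ m) (u u' : V f m) (hu : u ≠ 0) (hu' : u' ≠ 0)
    (hQeq : Q u = Q u') :
    ∃ g : (V f m →ₗ[Fq f] V f m)ˣ,
      (∀ v, Q ((g : V f m →ₗ[Fq f] V f m) v) = Q v) ∧
      (g : V f m →ₗ[Fq f] V f m) u = u' := by
  by_cases heq : u = u'
  · exact ⟨1, by simp, by simp [heq]⟩
  by_cases hB : B u u' ≠ 0
  · -- one transvection
    have haQ : Q (u + u') = B u u' := by
      rw [Qadd Q hQ hpolar, hQeq]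
      linear_combination (Q u') * (htwo (f := f))
    obtain ⟨g, hg, happ⟩ := transvection_exists Q hQ hpolar (u + u') (by rw [haQ]; exact hB)
    refine ⟨g, hg, ?_⟩
    rw [happ, B_add_right, B_self, zero_add, ← haQ,
      inv_mul_cancel₀ (by rw [haQ]; exact hB), one_smul]
    exact add_cancel_char2 Q hQ hpolar u u'
  · push_neg at hB
    have hz0 : u + u' ≠ 0 := by
      intro h
      exact heq (add_right_cancel (h.trans (addV u').symm))
    have hQz : Q (u + u') = 0 := by
      rw [Qadd Q hQ hpolar, hQeq, hB]
      linear_combination (Q u') * (htwo (f := f))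
    have hBuz : B u (u + u') = 0 := by
      rw [B_add_right, B_self, hB, add_zero]
    by_cases hA : ∃ a, B (u + u') a = 0 ∧ B u a = 1
    · obtain ⟨a, hza, hua⟩ := hA
      obtain ⟨g, hg, happ⟩ := eichler_exists Q hQ hpolar (u + u') a hQz hza
      refine ⟨g, hg, ?_⟩
      rw [happ, hBuz, hua, zero_smul, add_zero, mul_zero, add_zero, one_smul]
      exact add_cancel_char2 Q hQ hpolar u u'
    · push_neg at hA
      have hker : ∀ a, B (u + u') a = 0 → B u a = 0 := by
        intro a h
        by_contra hne
        apply hA ((B u a)⁻¹ • a)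
        · rw [B_smul_right, h, mul_zero]
        · rw [B_smul_right, inv_mul_cancel₀ hne]
      obtain ⟨b, hb⟩ := exists_B_eq_one (u + u') hz0
      set c0 : Fq f := B u b with hc0def
      have hkey : u + c0 • (u + u') = 0 := by
        apply eq_zero_of_B
        intro w
        have h1 : B u (w + (B (u + u') w) • b) = 0 := by
          apply hker
          rw [B_add_right, B_smul_right, hb, mul_one, B_comm]
          exact addF _
        rw [B_add_right, B_smul_right] at h1
        rw [B_add_left, B_smul_left]
        linear_combination h1
      have hu_eq : u = c0 • (u + u') := by
        exact add_right_cancel (hkey.trans (addV (c0 • (u + u'))).symm)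
      have hc0 : c0 ≠ 0 := by
        intro h
        rw [h, zero_smul] at hu_eq
        exact hu hu_eq
      have h2 : c0 • u' = (1 + c0) • u := by
        calc c0 • u' = c0 • u + (c0 • u + c0 • u') := by
              rw [← add_assoc, addV, zero_add]
          _ = c0 • u + c0 • (u + u') := by rw [smul_add]
          _ = c0 • u + u := by rw [← hu_eq]
          _ = (1 + c0) • u := by rw [add_smul, one_smul, add_comm]
      set c : Fq f := c0⁻¹ * (1 + c0) with hcdef
      have hu'_eq : u' = c • u := by
        rw [hcdef, mul_smul, ← h2, smul_smul, inv_mul_cancel₀ hc0, one_smul]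
      have hcne : c ≠ 0 := by
        intro h
        rw [h, zero_smul] at hu'_eq
        exact hu' hu'_eq
      have hQu0 : Q u = 0 := by
        by_contra hQu
        have h3 : c ^ 2 * Q u = Q u := by
          have h4 := hQ c u
          rw [← hu'_eq] at h4
          rw [← h4, ← hQeq]
        have h4 : (c + 1) ^ 2 * Q u = 0 := by
          linear_combination h3 + (c * Q u + Q u) * (htwo (f := f))
        have h5 : c + 1 = 0 := by
          rcases mul_eq_zero.mp h4 with h | h
          · exact pow_eq_zero_iff (by norm_num) |>.mp h
          · exact absurd h hQu
        have h6 : c = 1 := by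
          linear_combination h5 - (htwo (f := f))
        apply heq
        rw [hu'_eq, h6, one_smul]
      obtain ⟨v, hv0, hv1⟩ := exists_isotropic Q hQ hpolar hm u hu
      have hQu' : Q u' = 0 := by rw [← hQeq, hQu0]
      have hvu' : B v u' = c := by
        rw [hu'_eq, B_smul_right, B_comm, hv1, mul_one]
      have hQa1 : Q (u + v) = 1 := by
        rw [Qadd Q hQ hpolar, hQu0, hv0, hv1, zero_add, zero_add]
      have hQa2 : Q (v + u') = c := by
        rw [Qadd Q hQ hpolar, hv0, hQu', hvu', zero_add, zero_add]
      obtain ⟨g₁, hg₁, happ₁⟩ := transvection_exists Q hQ hpolar (u + v)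
        (by rw [hQa1]; exact one_ne_zero)
      obtain ⟨g₂, hg₂, happ₂⟩ := transvection_exists Q hQ hpolar (v + u')
        (by rw [hQa2]; exact hcne)
      refine ⟨g₂ * g₁, ?_, ?_⟩
      · intro w
        rw [Units.val_mul, Module.End.mul_apply, hg₂, hg₁]
      · rw [Units.val_mul, Module.End.mul_apply]
        have hg1u : (g₁ : V f m →ₗ[Fq f] V f m) u = v := by
          rw [happ₁, hQa1, B_add_right, B_self, hv1, zero_add, inv_one, one_mul, one_smul]
          exact add_cancel_char2 Q hQ hpolar u v
        rw [hg1u, happ₂, hQa2, B_add_right, B_self, hvu', zero_add,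
          inv_mul_cancel₀ hcne, one_smul]
        exact add_cancel_char2 Q hQ hpolar v u'

lemma exists_rep (hm : 2 ≤ m) (lam : Fq f) : ∃ w : V f m, w ≠ 0 ∧ Q w = lam := by
  have h0 : (0 : ℕ) < m := by omega
  have h1 : (1 : ℕ) < m := by omega
  set i0 : Fin m := ⟨0, h0⟩ with hi0
  set i1 : Fin m := ⟨1, h1⟩ with hi1
  have hi01 : i1 ≠ i0 := by
    intro h
    simpa [hi0, hi1] using congrArg Fin.val h
  by_cases ha1 : Q (eV i0) = 0
  · refine ⟨(lam + Q (fV i0)) • eV i0 + fV i0, ?_, ?_⟩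
    · intro h
      have := congrArg (fun w : V f m => w.2 i0) h
      simp [eV, fV] at this
    · rw [Qadd Q hQ hpolar, hQ, ha1, B_smul_left, B_fV]
      have : (eV i0 : V f m).1 i0 = 1 := by simp [eV]
      rw [this]
      linear_combination (Q (fV i0)) * (htwo (f := f))
  · by_cases hlam : lam = 0
    · by_cases ha2 : Q (eV i1) = 0
      · exact ⟨eV i1, eV_ne_zero i1, by rw [ha2, hlam]⟩
      · obtain ⟨s, hs⟩ := exists_sq (Q (eV i1))
        obtain ⟨t, ht⟩ := exists_sq (Q (eV i0))
        have hsne : s ≠ 0 := by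
          intro h
          rw [h] at hs
          exact ha2 (by rw [← hs]; ring)
        refine ⟨s • eV i0 + t • eV i1, ?_, ?_⟩
        · apply smul_eV_add_ne_zero s hsne i0
          simp [eV, Pi.single_apply, hi01]
        · have hB01 : B (eV i0 : V f m) (eV i1) = 0 := by
            rw [B_eV]; simp [eV]
          rw [Qadd Q hQ hpolar, hQ, hQ, B_smul_left, B_smul_right, hB01, hs, ht, hlam]
          linear_combination (Q (eV i0) * Q (eV i1)) * (htwo (f := f))
    · obtain ⟨s, hs⟩ := exists_sq_mul (Q (eV i0)) ha1 lam
      have hsne : s ≠ 0 := by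
        intro h
        rw [h] at hs
        apply hlam
        rw [← hs]; ring
      refine ⟨s • eV i0 + 0, ?_, ?_⟩
      · apply smul_eV_add_ne_zero s hsne i0
        rfl
      · rw [add_zero, hQ, ← hs]; ring

end Q2
end OrbAux

/-- For `m ≥ 2` and any quadratic form `Q` on `V` with polar form `B`, the isometry group
`O(Q) ≤ GL(V)` is transitive on each nonzero level set of `Q`. -/
theorem orthogonal_orbits_on_nonzero_vectors (f m : ℕ) (hf : 1 ≤ f) (hm : 2 ≤ m)
    (Q : V f m → Fq f)
    (hQ : ∀ c : Fq f, ∀ v : V f m, Q (c • v) = c ^ 2 * Q v)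
    (hpolar : ∀ u w : V f m, Q (u + w) + Q u + Q w = B u w) :
    (∀ u u' : V f m, u ≠ 0 → u' ≠ 0 →
      ((∃ g : (V f m →ₗ[Fq f] V f m)ˣ,
          (∀ v : V f m, Q ((g : V f m →ₗ[Fq f] V f m) v) = Q v) ∧
          (g : V f m →ₗ[Fq f] V f m) u = u') ↔ Q u = Q u')) ∧
    (∀ u : V f m, u ≠ 0 →
      {u' | ∃ g : (V f m →ₗ[Fq f] V f m)ˣ,
          (∀ v : V f m, Q ((g : V f m →ₗ[Fq f] V f m) v) = Q v) ∧
          (g : V f m →ₗ[Fq f] V f m) u = u'} =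
        {w : V f m | w ≠ 0 ∧ Q w = Q u}) ∧
    Nat.card {s : Set (V f m) | ∃ u : V f m, u ≠ 0 ∧
      s = {u' | ∃ g : (V f m →ₗ[Fq f] V f m)ˣ,
        (∀ v : V f m, Q ((g : V f m →ₗ[Fq f] V f m) v) = Q v) ∧
        (g : V f m →ₗ[Fq f] V f m) u = u'}} = 2 ^ f := by
  have part1 : ∀ u u' : V f m, u ≠ 0 → u' ≠ 0 →
      ((∃ g : (V f m →ₗ[Fq f] V f m)ˣ,
          (∀ v : V f m, Q ((g : V f m →ₗ[Fq f] V f m) v) = Q v) ∧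
          (g : V f m →ₗ[Fq f] V f m) u = u') ↔ Q u = Q u') := by
    intro u u' hu hu'
    constructor
    · rintro ⟨g, hg, rfl⟩
      exact (hg u).symm
    · intro h
      exact OrbAux.transitive Q hQ hpolar hm u u' hu hu' h
  have part2 : ∀ u : V f m, u ≠ 0 →
      {u' | ∃ g : (V f m →ₗ[Fq f] V f m)ˣ,
          (∀ v : V f m, Q ((g : V f m →ₗ[Fq f] V f m) v) = Q v) ∧
          (g : V f m →ₗ[Fq f] V f m) u = u'} =
        {w : V f m | w ≠ 0 ∧ Q w = Q u} := by
    intro u hu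
    ext w
    simp only [Set.mem_setOf_eq]
    constructor
    · rintro ⟨g, hg, rfl⟩
      exact ⟨OrbAux.unit_ne_zero Q hQ hpolar g u hu, hg u⟩
    · rintro ⟨hw, hQw⟩
      exact OrbAux.transitive Q hQ hpolar hm u w hu hw hQw.symm
  refine ⟨part1, part2, ?_⟩
  set L : Fq f → Set (V f m) := fun lam => {w : V f m | w ≠ 0 ∧ Q w = lam} with hL
  have hLinj : Function.Injective L := by
    intro x y hxy
    obtain ⟨w, hw, hQw⟩ := OrbAux.exists_rep Q hQ hpolar hm x
    have h1 : w ∈ L x := ⟨hw, hQw⟩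
    rw [hxy] at h1
    rw [← hQw, h1.2]
  have hset : {s : Set (V f m) | ∃ u : V f m, u ≠ 0 ∧
      s = {u' | ∃ g : (V f m →ₗ[Fq f] V f m)ˣ,
        (∀ v : V f m, Q ((g : V f m →ₗ[Fq f] V f m) v) = Q v) ∧
        (g : V f m →ₗ[Fq f] V f m) u = u'}} = Set.range L := by
    ext s
    simp only [Set.mem_setOf_eq, Set.mem_range]
    constructor
    · rintro ⟨u, hu, rfl⟩
      exact ⟨Q u, (part2 u hu).symm⟩
    · rintro ⟨lam, rfl⟩
      obtain ⟨w, hw, hQw⟩ := OrbAux.exists_rep Q hQ hpolar hm lam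
      refine ⟨w, hw, ?_⟩
      rw [part2 w hw, hQw]
  rw [hset, Nat.card_range_of_injective hLinj]
  exact GaloisField.card 2 f (by omega)
end

section
/- The coset spaces satisfy |Ω⁺| = q^m(q^m + 1)/2 and |Ω⁻| = q^m(q^m − 1)/2; that is, the index of O⁺ in G = Sp(V) is q^m(q^m+1)/2 and the index of O⁻ in G is q^m(q^m−1)/2. -/
set_option synthInstance.maxHeartbeats 1000000
set_option maxHeartbeats 1000000

open scoped BigOperators

/-- The symplectic group `Sp_{2m}(2^f)`: the invertible linear maps preserving `B`. -/
def Sp (f m : ℕ) : Subgroup ((V f m →ₗ[Fq f] V f m)ˣ) where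
  carrier := {g | ∀ u w : V f m,
    B ((g : V f m →ₗ[Fq f] V f m) u) ((g : V f m →ₗ[Fq f] V f m) w) = B u w}
  one_mem' := by intro u w; simp
  mul_mem' := by
    intro g h hg hh u w
    simp only [Units.val_mul, Module.End.mul_apply]
    rw [hg, hh]
  inv_mem' := by
    intro g hg u w
    have := hg (((g⁻¹ : _ˣ) : V f m →ₗ[Fq f] V f m) u)
      (((g⁻¹ : _ˣ) : V f m →ₗ[Fq f] V f m) w)
    simpa [← Module.End.mul_apply, ← Units.val_mul] using this.symm

/-- The natural action of the symplectic group on `V` by matrix multiplication. -/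
noncomputable instance {f m : ℕ} : MulAction (Sp f m) (V f m) where
  smul g v := ((g : (V f m →ₗ[Fq f] V f m)ˣ) : V f m →ₗ[Fq f] V f m) v
  one_smul v := by simp [HSMul.hSMul, SMul.smul]
  mul_smul g h v := by simp [HSMul.hSMul, SMul.smul, Units.val_mul]

/-- The quadratic form of plus type: `Q⁺(x,y) = ∑ i, x i * y i`. -/
noncomputable def Qplus {f m : ℕ} (v : V f m) : Fq f := ∑ i, v.1 i * v.2 i

/-- The quadratic form of minus type:
`Q⁻(x,y) = x 0 ^ 2 + a * y 0 ^ 2 + ∑ i, x i * y i`. -/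
noncomputable def Qminus {f m : ℕ} (hm : 0 < m) (a : Fq f) (v : V f m) : Fq f :=
  v.1 ⟨0, hm⟩ ^ 2 + a * v.2 ⟨0, hm⟩ ^ 2 + ∑ i, v.1 i * v.2 i

/-- The isometry group of a quadratic form `Q` on `V`, as a subgroup of `Sp`. -/
def Ogrp {f m : ℕ} (Q : V f m → Fq f) : Subgroup (Sp f m) where
  carrier := {g | ∀ v : V f m, Q (g • v) = Q v}
  one_mem' := by intro v; rw [one_smul]
  mul_mem' := by intro g h hg hh v; rw [mul_smul, hg, hh]
  inv_mem' := by
    intro g hg v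
    conv_rhs => rw [← smul_inv_smul g v]
    rw [hg]

/-- The orthogonal group `O⁺ = O⁺_{2m}(2^f)` of the plus-type form, inside `Sp`. -/
noncomputable def Oplus (f m : ℕ) : Subgroup (Sp f m) := Ogrp Qplus

/-- The orthogonal group `O⁻ = O⁻_{2m}(2^f)` of the minus-type form, inside `Sp`. -/
noncomputable def Ominus (f m : ℕ) (hm : 0 < m) (a : Fq f) : Subgroup (Sp f m) :=
  Ogrp (Qminus hm a)

namespace CardCosets
open Finset

variable {f m : ℕ}

noncomputable def sqrt {f : ℕ} (x : Fq f) : Fq f := (frobeniusEquiv (Fq f) 2).symm x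

lemma sqrt_sq (x : Fq f) : sqrt (x ^ 2) = x := by
  have := frobeniusEquiv_symm_apply_frobenius (Fq f) 2 x
  simpa [sqrt, frobenius_def] using this

lemma sq_sqrt (x : Fq f) : (sqrt x) ^ 2 = x := by
  have := frobenius_apply_frobeniusEquiv_symm (Fq f) 2 x
  simpa [sqrt, frobenius_def] using this

lemma sqrt_add (x y : Fq f) : sqrt (x + y) = sqrt x + sqrt y := by simp [sqrt]

lemma sqrt_mul (x y : Fq f) : sqrt (x * y) = sqrt x * sqrt y := by simp [sqrt]

lemma two_eq_zero : (2 : Fq f) = 0 := by exact_mod_cast CharP.cast_eq_zero (Fq f) 2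

lemma add_self_eq (x : Fq f) : x + x = 0 := by linear_combination x * (two_eq_zero (f := f))

lemma add_sq' (x y : Fq f) : (x + y) ^ 2 = x ^ 2 + y ^ 2 := by
  ring_nf
  linear_combination (2 : Fq f) * x * y * (two_eq_zero (f := f)) - x*y*two_eq_zero (f := f)

lemma sq_inj {x y : Fq f} (h : x ^ 2 = y ^ 2) : x = y := by
  have := congrArg sqrt h
  rwa [sqrt_sq, sqrt_sq] at this

-- basic B algebra
lemma B_symm (u w : V f m) : B u w = B w u := by
  unfold B; apply Finset.sum_congr rfl; intro i _; ring

lemma B_self (u : V f m) : B u u = 0 := by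
  unfold B
  rw [Finset.sum_eq_zero]
  intro i _
  rw [mul_comm (u.2 i), add_self_eq]

lemma B_add_right (u v w : V f m) : B u (v + w) = B u v + B u w := by
  unfold B
  rw [← Finset.sum_add_distrib]
  apply Finset.sum_congr rfl; intro i _
  simp only [Prod.fst_add, Prod.snd_add, Pi.add_apply]; ring

lemma B_add_left (u v w : V f m) : B (u + v) w = B u w + B v w := by
  rw [B_symm, B_add_right, B_symm w u, B_symm w v]

lemma B_smul_right (c : Fq f) (u v : V f m) : B u (c • v) = c * B u v := by
  unfold B
  rw [Finset.mul_sum]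
  apply Finset.sum_congr rfl; intro i _
  simp only [Prod.smul_fst, Prod.smul_snd, Pi.smul_apply, smul_eq_mul]; ring

lemma B_smul_left (c : Fq f) (u v : V f m) : B (c • u) v = c * B u v := by
  rw [B_symm, B_smul_right, B_symm]

lemma B_zero_left (v : V f m) : B 0 v = 0 := by
  unfold B; simp

lemma Qplus_add (u w : V f m) : Qplus (u + w) = Qplus u + Qplus w + B u w := by
  unfold Qplus B
  rw [← Finset.sum_add_distrib, ← Finset.sum_add_distrib]
  apply Finset.sum_congr rfl; intro i _
  simp only [Prod.fst_add, Prod.snd_add, Pi.add_apply]; ring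

lemma Qplus_smul (c : Fq f) (v : V f m) : Qplus (c • v) = c ^ 2 * Qplus v := by
  unfold Qplus
  rw [Finset.mul_sum]
  apply Finset.sum_congr rfl; intro i _
  simp only [Prod.smul_fst, Prod.smul_snd, Pi.smul_apply, smul_eq_mul]; ring

lemma Qplus_zero : Qplus (0 : V f m) = 0 := by unfold Qplus; simp

end CardCosets
namespace CardCosets
variable {f m : ℕ}

lemma sp_smul (g : Sp f m) (v : V f m) :
    g • v = ((g : (V f m →ₗ[Fq f] V f m)ˣ) : V f m →ₗ[Fq f] V f m) v := rfl

lemma sp_smul_add (g : Sp f m) (v w : V f m) : g • (v + w) = g • v + g • w := by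
  simp [sp_smul]

lemma sp_smul_smul (g : Sp f m) (c : Fq f) (v : V f m) : g • (c • v) = c • (g • v) := by
  simp [sp_smul]

lemma B_sp (g : Sp f m) (u v : V f m) : B (g • u) (g • v) = B u v := g.2 u v

lemma B_single_fst (u : V f m) (j : Fin m) : B u (Pi.single j 1, 0) = u.2 j := by
  unfold B
  simp [Pi.single_apply, mul_ite, Finset.sum_ite_eq']

lemma B_single_snd (u : V f m) (j : Fin m) : B u (0, Pi.single j 1) = u.1 j := by
  unfold B
  simp [Pi.single_apply, mul_ite, Finset.sum_ite_eq']

/-- The family of quadratic forms with polar form `B`. -/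
noncomputable def Qf (u : V f m) : V f m → Fq f := fun v => Qplus v + (B u v) ^ 2

lemma Qf_zero : Qf (0 : V f m) = Qplus := by
  funext v; simp [Qf, B_zero_left]

lemma Qf_inj : Function.Injective (Qf (f := f) (m := m)) := by
  intro u u' h
  have hB : ∀ v, B u v = B u' v := by
    intro v
    have h2 := congrFun h v
    simp only [Qf] at h2
    exact sq_inj (add_left_cancel h2)
  have h1 : u.1 = u'.1 := by
    funext j
    have := hB (0, Pi.single j 1)
    rwa [B_single_snd, B_single_snd] at this
  have h2 : u.2 = u'.2 := by
    funext j
    have := hB (Pi.single j 1, 0)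
    rwa [B_single_fst, B_single_fst] at this
  exact Prod.ext h1 h2

/-- The action of `Sp` on functions `V → Fq`. -/
noncomputable instance actF : MulAction (Sp f m) (V f m → Fq f) where
  smul g Q := fun v => Q (g⁻¹ • v)
  one_smul Q := by funext v; show Q ((1:Sp f m)⁻¹ • v) = Q v; rw [inv_one, one_smul]
  mul_smul g h Q := by
    funext v
    show Q ((g * h)⁻¹ • v) = Q (h⁻¹ • (g⁻¹ • v))
    rw [mul_inv_rev, mul_smul]

lemma smul_fun_def (g : Sp f m) (Q : V f m → Fq f) (v : V f m) : (g • Q) v = Q (g⁻¹ • v) := rfl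

/-- Symplectic transvection as a linear map. -/
noncomputable def Tlin (w : V f m) (c : Fq f) : V f m →ₗ[Fq f] V f m where
  toFun v := v + (c * B w v) • w
  map_add' v v' := by
    show v + v' + (c * B w (v + v')) • w = (v + (c * B w v) • w) + (v' + (c * B w v') • w)
    rw [B_add_right, mul_add, add_smul]
    abel
  map_smul' d v := by
    show d • v + (c * B w (d • v)) • w = d • (v + (c * B w v) • w)
    rw [B_smul_right, smul_add, smul_smul, mul_left_comm]

lemma Tlin_apply (w : V f m) (c : Fq f) (v : V f m) : Tlin w c v = v + (c * B w v) • w := rfl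

lemma Tlin_invol (w : V f m) (c : Fq f) (v : V f m) : Tlin w c (Tlin w c v) = v := by
  rw [Tlin_apply, Tlin_apply, B_add_right, B_smul_right, B_self, mul_zero, add_zero,
    add_assoc, ← add_smul, add_self_eq, zero_smul, add_zero]

/-- The transvection as a unit. -/
noncomputable def Tunit (w : V f m) (c : Fq f) : (V f m →ₗ[Fq f] V f m)ˣ where
  val := Tlin w c
  inv := Tlin w c
  val_inv := LinearMap.ext fun v => Tlin_invol w c v
  inv_val := LinearMap.ext fun v => Tlin_invol w c v

/-- The transvection as an element of `Sp`. -/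
noncomputable def TSp (w : V f m) (c : Fq f) : Sp f m :=
  ⟨Tunit w c, by
    intro u v
    show B (Tlin w c u) (Tlin w c v) = B u v
    rw [Tlin_apply, Tlin_apply, B_add_left, B_add_right, B_add_right,
      B_smul_left, B_smul_right, B_smul_right, B_smul_left, B_self]
    rw [B_symm u w, mul_zero, mul_zero, add_zero]
    linear_combination (c * B w u * B w v) * two_eq_zero (f := f)⟩

end CardCosets
namespace CardCosets
variable {f m : ℕ}

lemma TSp_smul (w : V f m) (c : Fq f) (v : V f m) : TSp w c • v = v + (c * B w v) • w := rfl

lemma TSp_mul_self (w : V f m) (c : Fq f) : TSp w c * TSp w c = 1 := by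
  apply Subtype.ext; apply Units.ext; apply LinearMap.ext; intro v
  exact Tlin_invol w c v

lemma TSp_inv (w : V f m) (c : Fq f) : (TSp w c)⁻¹ = TSp w c :=
  inv_eq_of_mul_eq_one_right (TSp_mul_self w c)

lemma Qf_TSp (u' w : V f m) (c : Fq f) (v : V f m) :
    Qf u' (TSp w c • v) = Qf u' v + (c ^ 2 * Qf u' w + c) * (B w v) ^ 2 := by
  rw [TSp_smul]
  simp only [Qf]
  rw [Qplus_add, Qplus_smul, B_add_right, B_smul_right, B_smul_right]
  linear_combination (c * B w v) * B_symm v w +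
    (c * B w v * B u' v * B u' w) * two_eq_zero (f := f)

lemma qf_mem_orbit (u u' : V f m) (h : ∃ β : Fq f, β ^ 2 + β = Qplus u + Qplus u') :
    Qf u ∈ MulAction.orbit (Sp f m) (Qf u') := by
  obtain ⟨β, hβ⟩ := h
  set w := u + u' with hw
  set s := Qf u' w with hsdef
  set γ := β + B u u' with hγ
  have hs : s = γ ^ 2 + γ := by
    simp only [hsdef, hw, hγ, Qf]
    rw [Qplus_add, B_add_right, B_self, add_zero, B_symm u' u]
    linear_combination hβ + (Qplus u + Qplus u' - B u u' * β - β - β ^ 2) * two_eq_zero (f := f)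
  obtain ⟨c, hc⟩ : ∃ c : Fq f, c ^ 2 * s + c = 1 := by
    by_cases h0 : s = 0
    · exact ⟨1, by rw [h0]; ring⟩
    · refine ⟨γ / s, ?_⟩
      have hinv : s * s⁻¹ = 1 := mul_inv_cancel₀ h0
      linear_combination (γ ^ 2 * s⁻¹ + 1) * hinv - s⁻¹ * hs
  refine MulAction.mem_orbit_iff.mpr ⟨TSp w c, funext fun v => ?_⟩
  rw [smul_fun_def, TSp_inv, Qf_TSp, ← hsdef, hc, one_mul]
  simp only [Qf, hw]
  rw [B_add_left]
  linear_combination (B u' v ^ 2 + B u v * B u' v) * two_eq_zero (f := f)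

end CardCosets
namespace CardCosets
variable {f m : ℕ}

/-- The square-root of the difference `Qplus ∘ g + Qplus`, as a linear functional. -/
noncomputable def ellmap (g : Sp f m) : V f m →ₗ[Fq f] Fq f where
  toFun v := sqrt (Qplus (g • v) + Qplus v)
  map_add' v v' := by
    show sqrt (Qplus (g • (v + v')) + Qplus (v + v'))
        = sqrt (Qplus (g • v) + Qplus v) + sqrt (Qplus (g • v') + Qplus v')
    have hD : Qplus (g • (v + v')) + Qplus (v + v')
        = (Qplus (g • v) + Qplus v) + (Qplus (g • v') + Qplus v') := by
      rw [sp_smul_add, Qplus_add, Qplus_add, B_sp]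
      linear_combination (B v v') * two_eq_zero (f := f)
    rw [hD, sqrt_add]
  map_smul' c v := by
    show sqrt (Qplus (g • (c • v)) + Qplus (c • v))
        = (RingHom.id (Fq f)) c • sqrt (Qplus (g • v) + Qplus v)
    have hD : Qplus (g • (c • v)) + Qplus (c • v) = c ^ 2 * (Qplus (g • v) + Qplus v) := by
      rw [sp_smul_smul, Qplus_smul, Qplus_smul]; ring
    rw [RingHom.id_apply, hD, sqrt_mul, sqrt_sq, smul_eq_mul]

lemma ell_sq (g : Sp f m) (v : V f m) :
    (ellmap g v) ^ 2 = Qplus (g • v) + Qplus v := sq_sqrt _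

/-- The vector representing `ellmap g` through `B`. -/
noncomputable def wvec (g : Sp f m) : V f m :=
  (fun i => ellmap g (0, Pi.single i 1), fun i => ellmap g (Pi.single i 1, 0))

lemma v_decomp (v : V f m) :
    v = (∑ i, v.1 i • ((Pi.single i 1 : Fin m → Fq f), (0 : Fin m → Fq f)))
      + ∑ i, v.2 i • ((0 : Fin m → Fq f), (Pi.single i 1 : Fin m → Fq f)) := by
  apply Prod.ext
  · rw [Prod.fst_add, Prod.fst_sum, Prod.fst_sum]
    funext j
    simp [Pi.single_apply, mul_ite, Finset.sum_ite_eq']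
  · rw [Prod.snd_add, Prod.snd_sum, Prod.snd_sum]
    funext j
    simp [Pi.single_apply, mul_ite, Finset.sum_ite_eq']

lemma ell_eq_B (g : Sp f m) (v : V f m) : ellmap g v = B (wvec g) v := by
  conv_lhs => rw [v_decomp v]
  rw [map_add, map_sum, map_sum]
  unfold B wvec
  rw [Finset.sum_add_distrib]
  simp only [map_smul, smul_eq_mul]
  rw [add_comm]
  congr 1 <;> (apply Finset.sum_congr rfl; intro i _; ring)
lemma qplus_comp (g : Sp f m) : ∃ w : V f m, ∀ v, Qplus (g • v) = Qf w v := by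
  refine ⟨wvec g, fun v => ?_⟩
  have h := ell_sq g v
  rw [ell_eq_B] at h
  simp only [Qf]
  linear_combination (-1 : Fq f) * h + (-(Qplus v)) * two_eq_zero (f := f)

lemma orbit_mem_family (u' : V f m) {Q : V f m → Fq f}
    (hQ : Q ∈ MulAction.orbit (Sp f m) (Qf u')) : ∃ u : V f m, Q = Qf u := by
  obtain ⟨g, rfl⟩ := MulAction.mem_orbit_iff.mp hQ
  obtain ⟨w, hw⟩ := qplus_comp (g⁻¹ : Sp f m)
  refine ⟨w + g • u', funext fun v => ?_⟩
  rw [smul_fun_def]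
  have hB : B u' (g⁻¹ • v) = B (g • u') v := by
    have h2 := B_sp g u' (g⁻¹ • v)
    rw [smul_inv_smul] at h2
    exact h2.symm
  simp only [Qf]
  rw [hw v, hB, B_add_left]
  simp only [Qf]
  linear_combination (-(B w v * B (g • u') v)) * two_eq_zero (f := f)
noncomputable instance : Fintype (Fq f) := Fintype.ofFinite _

lemma ncard_sigma {ι : Type*} [Fintype ι] (α : ι → Type*) [∀ i, Finite (α i)] :
    Nat.card (Σ i, α i) = ∑ i, Nat.card (α i) := by
  classical
  letI : ∀ i, Fintype (α i) := fun i => Fintype.ofFinite _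
  simp [Nat.card_eq_fintype_card]

def equivProdSigma {α β : Type*} (P : α × β → Prop) :
    {p : α × β // P p} ≃ Σ a : α, {b : β // P (a, b)} where
  toFun x := ⟨x.1.1, x.1.2, by simpa using x.2⟩
  invFun y := ⟨(y.1, y.2.1), y.2.2⟩
  left_inv := by rintro ⟨⟨a, b⟩, h⟩; rfl
  right_inv := by rintro ⟨a, b, h⟩; rfl

lemma card_prod_sum {α β : Type*} [Fintype α] [Finite β] (P : α × β → Prop) :
    Nat.card {p : α × β // P p} = ∑ a, Nat.card {b : β // P (a, b)} := by
  rw [Nat.card_congr (equivProdSigma P), ncard_sigma]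

lemma card_fiber_mul {G H : Type*} [AddCommGroup G] [AddCommGroup H] [Finite G]
    (φ : G →+ H) (hφ : Function.Surjective φ) (s : H) :
    Nat.card {g : G // φ g = s} * Nat.card H = Nat.card G := by
  obtain ⟨g₀, hg₀⟩ := hφ s
  have e : {g : G // φ g = s} ≃ AddMonoidHom.ker φ :=
    { toFun := fun x => ⟨x.1 - g₀, by
        rw [AddMonoidHom.mem_ker, map_sub, x.2, hg₀, sub_self]⟩
      invFun := fun k => ⟨k.1 + g₀, by
        rw [map_add, hg₀, AddMonoidHom.mem_ker.mp k.2, zero_add]⟩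
      left_inv := fun x => by simp
      right_inv := fun k => by simp }
  rw [Nat.card_congr e]
  have h1 := AddSubgroup.card_eq_card_quotient_mul_card_addSubgroup (AddMonoidHom.ker φ)
  have h2 : Nat.card (G ⧸ AddMonoidHom.ker φ) = Nat.card H :=
    Nat.card_congr (QuotientAddGroup.quotientKerEquivOfSurjective φ hφ).toEquiv
  rw [h1, h2, mul_comm]

def equivSigmaFiber {G H : Type*} (φ : G → H) (S : Set H) :
    {g : G // φ g ∈ S} ≃ Σ s : H, {g : G // φ g = s ∧ s ∈ S} where
  toFun x := ⟨φ x.1, x.1, rfl, x.2⟩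
  invFun y := ⟨y.2.1, by rw [y.2.2.1]; exact y.2.2.2⟩
  left_inv := by rintro ⟨g, h⟩; rfl
  right_inv := by rintro ⟨s, g, rfl, hs⟩; rfl

lemma card_mem_mul {G H : Type*} [AddCommGroup G] [AddCommGroup H] [Finite G] [Finite H]
    (φ : G →+ H) (hφ : Function.Surjective φ) (S : Set H) :
    Nat.card {g : G // φ g ∈ S} * Nat.card H = Nat.card S * Nat.card G := by
  classical
  letI : Fintype H := Fintype.ofFinite _
  rw [Nat.card_congr (equivSigmaFiber φ S), ncard_sigma, Finset.sum_mul]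
  have hterm : ∀ s : H, Nat.card {g : G // φ g = s ∧ s ∈ S} * Nat.card H
      = if s ∈ S then Nat.card G else 0 := by
    intro s
    by_cases hs : s ∈ S
    · rw [if_pos hs, Nat.card_congr (Equiv.subtypeEquivRight
        (fun g => and_iff_left hs))]
      exact card_fiber_mul φ hφ s
    · rw [if_neg hs]
      have : IsEmpty {g : G // φ g = s ∧ s ∈ S} :=
        ⟨by rintro ⟨g, _, h⟩; exact hs h⟩
      rw [Nat.card_of_isEmpty, zero_mul]
  rw [Finset.sum_congr rfl (fun s _ => hterm s), Finset.sum_ite, Finset.sum_const,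
    Finset.sum_const_zero, add_zero, smul_eq_mul, ← Fintype.card_subtype,
    ← Nat.card_eq_fintype_card]

/-- The dot-product functional `y ↦ ∑ x i * y i`. -/
noncomputable def dotHom (n : ℕ) (x : Fin n → Fq f) : (Fin n → Fq f) →+ Fq f :=
  AddMonoidHom.mk' (fun y => ∑ i, x i * y i) (by
    intro y z
    rw [← Finset.sum_add_distrib]
    exact Finset.sum_congr rfl fun i _ => by simp [mul_add])

lemma dotHom_surj {n : ℕ} {x : Fin n → Fq f} (hx : x ≠ 0) :
    Function.Surjective (dotHom n x) := by
  obtain ⟨j, hj⟩ := Function.ne_iff.mp hx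
  simp only [Pi.zero_apply] at hj
  intro s
  refine ⟨Pi.single j ((x j)⁻¹ * s), ?_⟩
  have : dotHom n x (Pi.single j ((x j)⁻¹ * s)) = ∑ i, x i * (Pi.single j ((x j)⁻¹ * s) : Fin n → Fq f) i := rfl
  rw [this, Finset.sum_eq_single j]
  · rw [Pi.single_eq_same, ← mul_assoc, mul_inv_cancel₀ hj, one_mul]
  · intro i _ hi; rw [Pi.single_eq_of_ne hi, mul_zero]
  · intro h; exact absurd (Finset.mem_univ j) h

lemma card_W (hf : f ≠ 0) (n : ℕ) : Nat.card (Fin n → Fq f) = 2 ^ (f * n) := by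
  rw [Nat.card_fun, Nat.card_eq_fintype_card (α := Fin n), Fintype.card_fin,
    GaloisField.card 2 f hf, ← pow_mul]

lemma sum_ite_zero {W : Type*} [Fintype W] [DecidableEq W] (z : W) (A C : ℕ) :
    (∑ x : W, if x = z then A else C) = A + (Fintype.card W - 1) * C := by
  classical
  rw [← Finset.add_sum_erase _ _ (Finset.mem_univ z), if_pos rfl]
  congr 1
  rw [Finset.sum_congr rfl (fun x hx => if_neg (Finset.ne_of_mem_erase hx)),
    Finset.sum_const, Finset.card_erase_of_mem (Finset.mem_univ z), Finset.card_univ,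
    smul_eq_mul]

lemma card_dot_zero_x (hf : f ≠ 0) {n : ℕ} (S : Set (Fq f)) :
    ∀ x : Fin n → Fq f, x ≠ 0 →
      Nat.card {y : Fin n → Fq f // (∑ i, x i * y i) ∈ S} * 2 ^ f
        = Nat.card S * Nat.card (Fin n → Fq f) := by
  intro x hx
  have := card_mem_mul (dotHom n x) (dotHom_surj hx) S
  rwa [GaloisField.card 2 f hf] at this

lemma card_dot_mem_pos (hf : f ≠ 0) (n : ℕ) (S : Set (Fq f)) (h0 : (0 : Fq f) ∈ S) :
    Nat.card {p : (Fin n → Fq f) × (Fin n → Fq f) // (∑ i, p.1 i * p.2 i) ∈ S} * 2 ^ f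
      = 2 ^ f * 2 ^ (f * n) + (2 ^ (f * n) - 1) * (Nat.card S * 2 ^ (f * n)) := by
  classical
  rw [card_prod_sum, Finset.sum_mul]
  have hterm : ∀ x : Fin n → Fq f,
      Nat.card {y : Fin n → Fq f // (∑ i, x i * y i) ∈ S} * 2 ^ f
        = if x = 0 then 2 ^ f * 2 ^ (f * n) else Nat.card S * 2 ^ (f * n) := by
    intro x
    by_cases hx : x = 0
    · subst hx
      rw [if_pos rfl]
      have hcond : ∀ y : Fin n → Fq f, (∑ i, (0 : Fin n → Fq f) i * y i) ∈ S := by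
        intro y; simpa using h0
      rw [Nat.card_congr (Equiv.subtypeUnivEquiv hcond), card_W hf, mul_comm]
    · rw [if_neg hx]
      have := card_dot_zero_x hf S x hx
      rwa [card_W hf] at this
  rw [Finset.sum_congr rfl (fun x _ => hterm x), sum_ite_zero,
    ← Nat.card_eq_fintype_card, card_W hf]

lemma card_dot_mem_neg (hf : f ≠ 0) (n : ℕ) (S : Set (Fq f)) (h0 : (0 : Fq f) ∉ S) :
    Nat.card {p : (Fin n → Fq f) × (Fin n → Fq f) // (∑ i, p.1 i * p.2 i) ∈ S} * 2 ^ f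
      = (2 ^ (f * n) - 1) * (Nat.card S * 2 ^ (f * n)) := by
  classical
  rw [card_prod_sum, Finset.sum_mul]
  have hterm : ∀ x : Fin n → Fq f,
      Nat.card {y : Fin n → Fq f // (∑ i, x i * y i) ∈ S} * 2 ^ f
        = if x = 0 then 0 else Nat.card S * 2 ^ (f * n) := by
    intro x
    by_cases hx : x = 0
    · subst hx
      rw [if_pos rfl]
      have : IsEmpty {y : Fin n → Fq f // (∑ i, (0 : Fin n → Fq f) i * y i) ∈ S} := by
        constructor; rintro ⟨y, hy⟩
        apply h0; simpa using hy
      rw [Nat.card_of_isEmpty, zero_mul]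
    · rw [if_neg hx]
      have := card_dot_zero_x hf S x hx
      rwa [card_W hf] at this
  rw [Finset.sum_congr rfl (fun x _ => hterm x), sum_ite_zero,
    ← Nat.card_eq_fintype_card, card_W hf, zero_add]
/-- The Artin–Schreier additive map `x ↦ x² + x`. -/
noncomputable def asHom : Fq f →+ Fq f :=
  AddMonoidHom.mk' (fun x => x ^ 2 + x) (by
    intro x y
    show (x + y) ^ 2 + (x + y) = (x ^ 2 + x) + (y ^ 2 + y)
    rw [add_sq']; ring)

/-- The Artin–Schreier subgroup `{x² + x}`. -/
noncomputable def AS : AddSubgroup (Fq f) := asHom.range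

lemma mem_AS_iff {s : Fq f} : s ∈ AS (f := f) ↔ ∃ β : Fq f, β ^ 2 + β = s := Iff.rfl

lemma zero_mem_AS : (0 : Fq f) ∈ AS (f := f) := AddSubgroup.zero_mem _

lemma card_AS (hf : f ≠ 0) : Nat.card (AS (f := f)) * 2 = 2 ^ f := by
  have hker : ((asHom (f := f)).ker : Set (Fq f)) = {0, 1} := by
    ext x
    rw [SetLike.mem_coe, AddMonoidHom.mem_ker, Set.mem_insert_iff, Set.mem_singleton_iff]
    have hfac : asHom (f := f) x = x * (x + 1) := by
      show x ^ 2 + x = x * (x + 1); ring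
    constructor
    · intro hx
      have hx' : x * (x + 1) = 0 := by rw [← hfac]; exact hx
      rcases mul_eq_zero.mp hx' with h | h
      · exact Or.inl h
      · refine Or.inr ?_
        linear_combination h - two_eq_zero (f := f)
    · rintro (rfl | rfl)
      · show (0 : Fq f) ^ 2 + 0 = 0
        ring
      · show (1 : Fq f) ^ 2 + 1 = 0
        rw [one_pow]; exact add_self_eq 1
  have hkercard : Nat.card (asHom (f := f)).ker = 2 := by
    have : Nat.card (asHom (f := f)).ker = Nat.card (({0, 1} : Set (Fq f))) := by
      exact Nat.card_congr (Equiv.setCongr hker)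
    rw [this, Nat.card_coe_set_eq, Set.ncard_pair (zero_ne_one)]
  have h1 := AddSubgroup.card_eq_card_quotient_mul_card_addSubgroup (asHom (f := f)).ker
  have h2 : Nat.card (Fq f ⧸ (asHom (f := f)).ker) = Nat.card (AS (f := f)) :=
    Nat.card_congr (QuotientAddGroup.quotientKerEquivRange (asHom (f := f))).toEquiv
  rw [h2, hkercard] at h1
  rw [← h1]
  exact GaloisField.card 2 f hf

lemma AS_add_not_mem {s t : Fq f} (hf : f ≠ 0) (hs : s ∉ AS (f := f)) (ht : t ∉ AS (f := f)) :
    s + t ∈ AS (f := f) := by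
  classical
  set H : Set (Fq f) := (AS (f := f) : Set (Fq f)) with hH
  have hdisj : Disjoint H ((s + ·) '' H) := by
    rw [Set.disjoint_left]
    rintro x hx ⟨h, hh, rfl⟩
    apply hs
    have : s = (s + h) + h := by
      rw [add_assoc, add_self_eq, add_zero]
    rw [hH] at hx hh
    rw [this]
    exact AddSubgroup.add_mem _ hx hh
  have hcard : (H ∪ (s + ·) '' H).ncard = 2 ^ f := by
    rw [Set.ncard_union_eq hdisj (Set.toFinite _) (Set.toFinite _),
      Set.ncard_image_of_injective _ (add_right_injective s)]
    have : H.ncard = Nat.card (AS (f := f)) := by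
      rw [hH, ← Nat.card_coe_set_eq]
      rfl
    rw [this]
    have := card_AS (f := f) hf
    omega
  have huniv : H ∪ (s + ·) '' H = Set.univ := by
    apply Set.eq_of_subset_of_ncard_le (Set.subset_univ _)
    rw [hcard, Set.ncard_univ, GaloisField.card 2 f hf]
  have : t ∈ H ∪ (s + ·) '' H := by rw [huniv]; trivial
  rcases this with h | ⟨h, hh, heq⟩
  · exact absurd h ht
  · have : s + t = h := by
      rw [← heq, ← add_assoc, add_self_eq, zero_add]
    rw [this]
    exact hh

lemma sqrt_a_not_mem {a : Fq f} (ha : ∀ α : Fq f, α ^ 2 + α ≠ a) :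
    sqrt a ∉ AS (f := f) := by
  rintro ⟨β, hβ0⟩
  have hβ : β ^ 2 + β = sqrt a := hβ0
  exact ha (β ^ 2) (by
    rw [← sq_sqrt (f := f) a, ← hβ]
    linear_combination (-(β ^ 3)) * two_eq_zero (f := f))
/-- The vector by which `Qminus` differs from `Qplus`. -/
noncomputable def u0 {m : ℕ} (hm : 0 < m) (a : Fq f) : V f m :=
  (Pi.single ⟨0, hm⟩ (sqrt a), Pi.single ⟨0, hm⟩ 1)

lemma B_u0 {m : ℕ} (hm : 0 < m) (a : Fq f) (v : V f m) :
    B (u0 hm a) v = v.1 ⟨0, hm⟩ + sqrt a * v.2 ⟨0, hm⟩ := by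
  unfold B u0
  simp only [Pi.single_apply, ite_mul, zero_mul, one_mul, mul_ite, mul_zero]
  rw [Finset.sum_add_distrib,
    Finset.sum_ite_eq' Finset.univ (⟨0, hm⟩ : Fin m) (fun x => sqrt a * v.2 x),
    Finset.sum_ite_eq' Finset.univ (⟨0, hm⟩ : Fin m) (fun x => v.1 x),
    if_pos (Finset.mem_univ _), if_pos (Finset.mem_univ _), add_comm]

lemma Qplus_u0 {m : ℕ} (hm : 0 < m) (a : Fq f) : Qplus (u0 hm a) = sqrt a := by
  unfold Qplus u0
  simp only [Pi.single_apply, ite_mul, zero_mul, mul_ite, mul_one, mul_zero]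
  rw [Finset.sum_ite_eq' Finset.univ (⟨0, hm⟩ : Fin m), if_pos (Finset.mem_univ _), if_pos rfl]

lemma Qminus_eq_Qf {m : ℕ} (hm : 0 < m) (a : Fq f) : Qminus hm a = Qf (u0 hm a) := by
  funext v
  show Qminus hm a v = Qplus v + (B (u0 hm a) v) ^ 2
  rw [B_u0]
  unfold Qminus Qplus
  linear_combination (-(v.2 ⟨0, hm⟩ ^ 2)) * sq_sqrt (f := f) a +
    (-(sqrt a * v.1 ⟨0, hm⟩ * v.2 ⟨0, hm⟩)) * two_eq_zero (f := f)

lemma add_eq_zero_iff' (x y : Fq f) : x + y = 0 ↔ y = x := by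
  constructor
  · intro h
    linear_combination h - x * two_eq_zero (f := f)
  · rintro rfl
    exact add_self_eq _

lemma card_qplus_zero (hf : f ≠ 0) (n : ℕ) :
    Nat.card {v : V f n // Qplus v = 0} * 2 ^ f
      = 2 ^ f * 2 ^ (f * n) + (2 ^ (f * n) - 1) * 2 ^ (f * n) := by
  have h := card_dot_mem_pos hf n ({0} : Set (Fq f)) rfl
  have h1 : Nat.card (({0} : Set (Fq f))) = 1 := by
    rw [Nat.card_coe_set_eq, Set.ncard_singleton]
  rw [h1, one_mul] at h
  have he : Nat.card {v : V f n // Qplus v = 0}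
      = Nat.card {p : (Fin n → Fq f) × (Fin n → Fq f) //
          (∑ i, p.1 i * p.2 i) ∈ ({0} : Set (Fq f))} :=
    Nat.card_congr (Equiv.subtypeEquivRight (fun v => Set.mem_singleton_iff.symm))
  rw [he]
  exact h

lemma card_qplus_AS (hf : f ≠ 0) (n : ℕ) :
    Nat.card {v : V f n // Qplus v ∈ AS (f := f)} * 2 ^ f
      = 2 ^ f * 2 ^ (f * n)
        + (2 ^ (f * n) - 1) * (Nat.card (AS (f := f)) * 2 ^ (f * n)) := by
  have h := card_dot_mem_pos hf n ((AS (f := f) : Set (Fq f))) zero_mem_AS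
  have h1 : Nat.card ((AS (f := f) : Set (Fq f))) = Nat.card (AS (f := f)) := rfl
  rw [h1] at h
  have he : Nat.card {v : V f n // Qplus v ∈ AS (f := f)}
      = Nat.card {p : (Fin n → Fq f) × (Fin n → Fq f) //
          (∑ i, p.1 i * p.2 i) ∈ ((AS (f := f)) : Set (Fq f))} :=
    Nat.card_congr (Equiv.subtypeEquivRight (fun v => Iff.rfl))
  rw [he]
  exact h

lemma aniso {a : Fq f} (ha : ∀ α : Fq f, α ^ 2 + α ≠ a) (x y : Fq f)
    (h : x ^ 2 + x * y + a * y ^ 2 = 0) : x = 0 ∧ y = 0 := by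
  by_cases hy : y = 0
  · subst hy
    refine ⟨?_, rfl⟩
    have hx2 : x ^ 2 = 0 := by linear_combination h
    exact pow_eq_zero_iff (by norm_num : (2:ℕ) ≠ 0) |>.mp hx2
  · exfalso
    apply ha (x / y)
    have hinv : y * y⁻¹ = 1 := mul_inv_cancel₀ hy
    linear_combination y⁻¹ ^ 2 * h - (x * y⁻¹ + a * (y * y⁻¹ + 1)) * hinv - a * two_eq_zero (f := f)
/-- Splitting off the first coordinates. -/
noncomputable def splitEquiv {k : ℕ} :
    V f (k + 1) ≃ (Fq f × Fq f) × ((Fin k → Fq f) × (Fin k → Fq f)) where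
  toFun v := ((v.1 0, v.2 0), (fun i => v.1 i.succ, fun i => v.2 i.succ))
  invFun p := (Fin.cons p.1.1 p.2.1, Fin.cons p.1.2 p.2.2)
  left_inv v := by
    apply Prod.ext <;>
      · funext i
        refine Fin.cases ?_ ?_ i <;> simp
  right_inv p := by simp

lemma card_qminus_zero (hf : f ≠ 0) {k : ℕ} (hm : 0 < k + 1) (a : Fq f)
    (ha : ∀ α : Fq f, α ^ 2 + α ≠ a) :
    Nat.card {v : V f (k + 1) // Qminus hm a v = 0} * 2 ^ f
      = (2 ^ f * 2 ^ (f * k) + (2 ^ (f * k) - 1) * 2 ^ (f * k))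
        + (2 ^ f * 2 ^ f - 1) * ((2 ^ (f * k) - 1) * 2 ^ (f * k)) := by
  classical
  set s : Fq f × Fq f → Fq f := fun ab => ab.1 ^ 2 + ab.1 * ab.2 + a * ab.2 ^ 2 with hs
  have hzero : (⟨0, hm⟩ : Fin (k + 1)) = 0 := rfl
  have hsplit : ∀ v : V f (k + 1),
      Qminus hm a v = s (v.1 0, v.2 0) + ∑ i : Fin k, v.1 i.succ * v.2 i.succ := by
    intro v
    unfold Qminus
    rw [Fin.sum_univ_succ, hzero, hs]
    ring
  have he : Nat.card {v : V f (k + 1) // Qminus hm a v = 0}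
      = Nat.card {p : (Fq f × Fq f) × ((Fin k → Fq f) × (Fin k → Fq f)) //
          s p.1 + ∑ i, p.2.1 i * p.2.2 i = 0} :=
    Nat.card_congr (Equiv.subtypeEquiv (splitEquiv (f := f) (k := k)) (fun v => by rw [hsplit v]; exact Iff.rfl))
  rw [he, card_prod_sum, Finset.sum_mul]
  have hterm : ∀ ab : Fq f × Fq f,
      Nat.card {xy : (Fin k → Fq f) × (Fin k → Fq f) // s ab + ∑ i, xy.1 i * xy.2 i = 0} * 2 ^ f
        = if s ab = 0 then (2 ^ f * 2 ^ (f * k) + (2 ^ (f * k) - 1) * 2 ^ (f * k))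
          else (2 ^ (f * k) - 1) * 2 ^ (f * k) := by
    intro ab
    have hiff : ∀ xy : (Fin k → Fq f) × (Fin k → Fq f),
        (s ab + ∑ i, xy.1 i * xy.2 i = 0)
          ↔ ((∑ i, xy.1 i * xy.2 i) ∈ ({s ab} : Set (Fq f))) := by
      intro xy
      rw [Set.mem_singleton_iff]
      exact add_eq_zero_iff' _ _
    rw [Nat.card_congr (Equiv.subtypeEquivRight hiff)]
    have hsing : Nat.card (({s ab} : Set (Fq f))) = 1 := by
      rw [Nat.card_coe_set_eq, Set.ncard_singleton]
    by_cases h0 : s ab = 0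
    · rw [if_pos h0]
      have h := card_dot_mem_pos hf k ({s ab} : Set (Fq f)) (by rw [h0]; rfl)
      rwa [hsing, one_mul] at h
    · rw [if_neg h0]
      have h := card_dot_mem_neg hf k ({s ab} : Set (Fq f))
        (fun hmem => h0 (Set.mem_singleton_iff.mp hmem).symm)
      rwa [hsing, one_mul] at h
  rw [Finset.sum_congr rfl (fun ab _ => hterm ab), Finset.sum_ite, Finset.sum_const,
    Finset.sum_const, smul_eq_mul, smul_eq_mul]
  have hcard1 : (Finset.univ.filter (fun ab : Fq f × Fq f => s ab = 0)).card = 1 := by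
    rw [← Fintype.card_subtype]
    rw [Fintype.card_eq_one_iff]
    refine ⟨⟨(0, 0), by show (0 : Fq f) ^ 2 + 0 * 0 + a * 0 ^ 2 = 0; ring⟩, ?_⟩
    rintro ⟨⟨x, y⟩, hxy⟩
    obtain ⟨hx, hy⟩ := aniso ha x y hxy
    subst hx; subst hy
    rfl
  have hcard2 : (Finset.univ.filter (fun ab : Fq f × Fq f => ¬ s ab = 0)).card
      = 2 ^ f * 2 ^ f - 1 := by
    have hsum := Finset.card_filter_add_card_filter_not
      (s := (Finset.univ : Finset (Fq f × Fq f))) (p := fun ab => s ab = 0)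
    have huniv : (Finset.univ : Finset (Fq f × Fq f)).card = 2 ^ f * 2 ^ f := by
      rw [Finset.card_univ, Fintype.card_prod, ← Nat.card_eq_fintype_card,
        GaloisField.card 2 f hf]
    omega
  rw [hcard1, hcard2, one_mul]
lemma counts_ne (hf : 1 ≤ f) {m : ℕ} (hm : 0 < m) (a : Fq f)
    (ha : ∀ α : Fq f, α ^ 2 + α ≠ a) :
    Nat.card {v : V f m // Qplus v = 0} ≠ Nat.card {v : V f m // Qminus hm a v = 0} := by
  obtain ⟨k, rfl⟩ : ∃ k, m = k + 1 := ⟨m - 1, by omega⟩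
  intro hEq
  have hf0 : f ≠ 0 := by omega
  have h1 := card_qplus_zero (f := f) hf0 (k + 1)
  have h2 := card_qminus_zero hf0 hm a ha
  rw [hEq] at h1
  have h3 := h1.symm.trans h2
  have hP : (2 : ℕ) ^ (f * (k + 1)) = 2 ^ (f * k) * 2 ^ f := by
    rw [show f * (k + 1) = f * k + f by ring, pow_add]
  rw [hP] at h3
  set q := 2 ^ f with hqdef
  set Pk := 2 ^ (f * k) with hPkdef
  have hq : 2 ≤ q := by
    rw [hqdef]
    calc 2 = 2 ^ 1 := (pow_one 2).symm
    _ ≤ 2 ^ f := Nat.pow_le_pow_right (by norm_num) hf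
  have hPk : 1 ≤ Pk := Nat.one_le_two_pow
  have hPq : 1 ≤ Pk * q := Nat.one_le_iff_ne_zero.mpr (by positivity)
  have hqq : 1 ≤ q * q := Nat.one_le_iff_ne_zero.mpr (by positivity)
  zify [hPk, hPq, hqq] at h3
  have hq' : (2 : ℤ) ≤ (q : ℤ) := by exact_mod_cast hq
  have hPk' : (1 : ℤ) ≤ (Pk : ℤ) := by exact_mod_cast hPk
  nlinarith [h3, hq', hPk', mul_le_mul_of_nonneg_right hq' (by linarith : (0:ℤ) ≤ (Pk:ℤ)),
    mul_pos (by linarith : (0:ℤ) < (q:ℤ)) (by linarith : (0:ℤ) < (Pk:ℤ))]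

lemma card_zero_orbit {Q Q' : V f m → Fq f}
    (h : Q' ∈ MulAction.orbit (Sp f m) Q) :
    Nat.card {v : V f m // Q' v = 0} = Nat.card {v : V f m // Q v = 0} := by
  obtain ⟨g, rfl⟩ := h
  exact Nat.card_congr (Equiv.subtypeEquiv (MulAction.toPerm (g⁻¹ : Sp f m))
    (fun v => Iff.rfl))
lemma Ogrp_eq_stab (Q : V f m → Fq f) :
    Ogrp Q = MulAction.stabilizer (Sp f m) Q := by
  ext g
  constructor
  · intro hg
    show g • Q = Q
    funext v
    rw [smul_fun_def]
    have := hg (g⁻¹ • v)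
    rw [smul_inv_smul] at this
    exact this.symm
  · intro hg v
    have : g • Q = Q := hg
    have h2 := congrFun this (g • v)
    rw [smul_fun_def, inv_smul_smul] at h2
    exact h2.symm

lemma card_quot (Q : V f m → Fq f) :
    Nat.card (Sp f m ⧸ Ogrp Q) = Nat.card (MulAction.orbit (Sp f m) Q) := by
  rw [Ogrp_eq_stab]
  exact (Nat.card_congr (MulAction.orbitEquivQuotientStabilizer (Sp f m) Q)).symm

lemma orbit_sets {a : Fq f} (hf : 1 ≤ f) (hm : 0 < m)
    (ha : ∀ α : Fq f, α ^ 2 + α ≠ a) :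
    MulAction.orbit (Sp f m) (Qplus (f := f) (m := m))
        = Qf '' {u : V f m | Qplus u ∈ AS (f := f)}
    ∧ MulAction.orbit (Sp f m) (Qminus hm a)
        = Qf '' {u : V f m | Qplus u ∈ AS (f := f)}ᶜ := by
  have hf0 : f ≠ 0 := by omega
  have hsubA : ∀ u : V f m, Qplus u ∈ AS (f := f) →
      Qf u ∈ MulAction.orbit (Sp f m) (Qplus (f := f) (m := m)) := by
    intro u hu
    rw [← Qf_zero]
    refine qf_mem_orbit u 0 ?_
    obtain ⟨β, hβ⟩ := hu
    exact ⟨β, by rw [Qplus_zero, add_zero]; exact hβ⟩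
  have hsubB : ∀ u : V f m, Qplus u ∉ AS (f := f) →
      Qf u ∈ MulAction.orbit (Sp f m) (Qminus hm a) := by
    intro u hu
    rw [Qminus_eq_Qf hm a]
    refine qf_mem_orbit u (u0 hm a) ?_
    rw [Qplus_u0 hm a]
    exact mem_AS_iff.mp (AS_add_not_mem hf0 hu (sqrt_a_not_mem ha))
  have hdisj : Disjoint (MulAction.orbit (Sp f m) (Qplus (f := f) (m := m)))
      (MulAction.orbit (Sp f m) (Qminus hm a)) := by
    rw [Set.disjoint_left]
    intro Q hQp hQm
    have h1 := MulAction.orbit_eq_iff.mpr hQp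
    have h2 := MulAction.orbit_eq_iff.mpr hQm
    have hmem : Qminus hm a ∈ MulAction.orbit (Sp f m) (Qplus (f := f) (m := m)) := by
      rw [← h1, h2]
      exact MulAction.mem_orbit_self _
    exact counts_ne hf hm a ha (card_zero_orbit hmem).symm
  constructor
  · apply Set.Subset.antisymm
    · intro Q hQ
      rw [← Qf_zero] at hQ
      obtain ⟨u, rfl⟩ := orbit_mem_family 0 hQ
      by_cases hu : Qplus u ∈ AS (f := f)
      · exact ⟨u, hu, rfl⟩
      · rw [Qf_zero] at hQ
        exact absurd (hsubB u hu) (fun h => Set.disjoint_left.mp hdisj hQ h)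
    · rintro Q ⟨u, hu, rfl⟩
      exact hsubA u hu
  · apply Set.Subset.antisymm
    · intro Q hQ
      have hQ' := hQ
      rw [Qminus_eq_Qf hm a] at hQ'
      obtain ⟨u, rfl⟩ := orbit_mem_family (u0 hm a) hQ'
      by_cases hu : Qplus u ∈ AS (f := f)
      · exact absurd hQ (fun h => Set.disjoint_left.mp hdisj (hsubA u hu) h)
      · exact ⟨u, hu, rfl⟩
    · rintro Q ⟨u, hu, rfl⟩
      exact hsubB u hu
end CardCosets

/-- The indices of the orthogonal subgroups in `G = Sp_{2m}(2^f)`: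
`|Ω⁺| = |G : O⁺| = q^m (q^m + 1)/2` and `|Ω⁻| = |G : O⁻| = q^m (q^m - 1)/2`, where `q = 2^f`. -/
theorem card_cosets_orthogonal (f m : ℕ) (hf : 1 ≤ f) (hm : 0 < m) (a : Fq f)
    (ha : ∀ α : Fq f, α ^ 2 + α ≠ a) :
    Nat.card (Sp f m ⧸ Oplus f m) = (2 ^ f) ^ m * ((2 ^ f) ^ m + 1) / 2 ∧
    Nat.card (Sp f m ⧸ Ominus f m hm a) = (2 ^ f) ^ m * ((2 ^ f) ^ m - 1) / 2 := by
  have hf0 : f ≠ 0 := by omega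
  obtain ⟨hOp, hOm⟩ := CardCosets.orbit_sets (m := m) hf hm ha
  set P : ℕ := 2 ^ (f * m) with hP
  set K := Nat.card {u : V f m // Qplus u ∈ CardCosets.AS (f := f)} with hK
  have hKA : K * 2 ^ f
      = 2 ^ f * P + (P - 1) * (Nat.card (CardCosets.AS (f := f)) * P) :=
    CardCosets.card_qplus_AS hf0 m
  have hAS2 : Nat.card (CardCosets.AS (f := f)) * 2 = 2 ^ f := CardCosets.card_AS hf0
  have h2f : 2 ≤ 2 ^ f := by
    calc 2 = 2 ^ 1 := (pow_one 2).symm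
    _ ≤ 2 ^ f := Nat.pow_le_pow_right (by norm_num) hf
  have h2K : 2 * K = 2 * P + (P - 1) * P := by
    set c := Nat.card (CardCosets.AS (f := f)) with hc
    have hcpos : 0 < c := by omega
    apply Nat.eq_of_mul_eq_mul_right hcpos
    calc (2 * K) * c = K * (c * 2) := by ring
    _ = 2 ^ f * P + (P - 1) * (c * P) := by rw [hAS2]; exact hKA
    _ = (2 * P + (P - 1) * P) * c := by rw [← hAS2]; ring
  have hP1 : 1 ≤ P := Nat.one_le_two_pow
  have hsub : (P - 1) * P = P * P - P := by rw [Nat.sub_mul, one_mul]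
  have hcardV : Nat.card (V f m) = P * P := by
    rw [Nat.card_prod, CardCosets.card_W hf0]
  -- cardinality of the plus set and its complement
  have hsetA : (({u : V f m | Qplus u ∈ CardCosets.AS (f := f)}) : Set (V f m)).ncard = K := by
    rw [← Nat.card_coe_set_eq]
    rfl
  have hKc : (({u : V f m | Qplus u ∈ CardCosets.AS (f := f)}ᶜ) : Set (V f m)).ncard
      = P * P - K := by
    have := Set.ncard_add_ncard_compl ({u : V f m | Qplus u ∈ CardCosets.AS (f := f)})
    rw [hsetA, hcardV] at this
    omega
  obtain ⟨PP, hPPe⟩ : ∃ PP, P * P = PP := ⟨_, rfl⟩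
  have hPle : P ≤ PP := by
    rw [← hPPe]
    exact Nat.le_mul_of_pos_left P (by omega)
  constructor
  · have e1 : Nat.card (Sp f m ⧸ Oplus f m)
        = Nat.card (MulAction.orbit (Sp f m) (Qplus (f := f) (m := m))) :=
      CardCosets.card_quot Qplus
    rw [e1, hOp, Nat.card_coe_set_eq,
      Set.ncard_image_of_injective _ CardCosets.Qf_inj, hsetA]
    rw [← pow_mul, ← hP]
    have hx : P * (P + 1) = P * P + P := by ring
    rw [hPPe] at hx
    rw [hPPe] at hsub
    omega
  · have e1 : Nat.card (Sp f m ⧸ Ominus f m hm a)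
        = Nat.card (MulAction.orbit (Sp f m) (Qminus hm a)) :=
      CardCosets.card_quot (Qminus hm a)
    rw [e1, hOm, Nat.card_coe_set_eq,
      Set.ncard_image_of_injective _ CardCosets.Qf_inj, hKc]
    rw [← pow_mul, ← hP]
    have hx : P * (P - 1) = P * P - P := by
      cases P with
      | zero => rfl
      | succ p => rw [Nat.succ_sub_one]; ring_nf; omega
    rw [hPPe] at hx
    rw [hPPe] at hsub
    omega
end
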